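/- Let X be a compact metric space and f_{0,∞} an equicontinuous sequence of continuous self-maps (i.e., the family {f_p^i : p ≥ 0, i in any fixed finite range} is uniformly equicontinuous). If the topological entropy h(f_{0,∞}) > 0, then the supremum topological sequence entropy h*(f_{0,∞}) = sup_{A} h_A(f_{0,∞}) is infinite. -/

import Mathlib

open Filter Set MeasureTheory

/-- `nacomp f i n = f (i+n-1) ∘ ⋯ ∘ f i`, the `n`-fold composition of the
nonautonomous system starting at index `i`. -/
def nacomp {X : Type*} (f : ℕ → X → X) (i : ℕ) : ℕ → X → X
  | 0 => id
  | n + 1 => f (i + n) ∘ nacomp f i n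

/-- `E` is an `(n, ε, A)`-separated subset of `Λ` for the nonautonomous system `f`. -/
def IsSepSet {X : Type*} [PseudoMetricSpace X] (f : ℕ → X → X) (A : ℕ → ℕ) (n : ℕ)
    (ε : ℝ) (Λ : Set X) (E : Finset X) : Prop :=
  ↑E ⊆ Λ ∧ ∀ x ∈ E, ∀ y ∈ E, x ≠ y →
    ∃ j : Fin n, ε < dist (nacomp f 0 (A j) x) (nacomp f 0 (A j) y)

/-- `s_n(ε, A, f, Λ)`: maximal cardinality of an `(n,ε,A)`-separated subset of `Λ`. -/
noncomputable def maxSep {X : Type*} [PseudoMetricSpace X] (f : ℕ → X → X) (A : ℕ → ℕ)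
    (n : ℕ) (ε : ℝ) (Λ : Set X) : ℕ :=
  sSup {m | ∃ E : Finset X, IsSepSet f A n ε Λ E ∧ E.card = m}

/-- Topological sequence entropy of `f` on `Λ` along `A`, via separated sets:
`lim_{ε → 0} limsup_n (1/n) log s_n(ε,A,f,Λ)`, the limit realized as a supremum over `ε > 0`. -/
noncomputable def sepEnt {X : Type*} [PseudoMetricSpace X] (f : ℕ → X → X) (A : ℕ → ℕ)
    (Λ : Set X) : EReal :=
  ⨆ ε : {ε : ℝ // 0 < ε},
    limsup (fun n : ℕ => ((Real.log (maxSep f A n ε Λ) / n : ℝ) : EReal)) atTop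

/-- A finite open cover of the whole space. -/
def IsFinOpenCover {X : Type*} [TopologicalSpace X] (𝒜 : Finset (Set X)) : Prop :=
  (∀ u ∈ 𝒜, IsOpen u) ∧ ⋃₀ ↑𝒜 = (univ : Set X)

/-- A cell `⋂_j (f_0^{a_j})⁻¹ (u j)` of the join `⋁_{j} f_0^{-a_j} 𝒜`. -/
def seqCell {X : Type*} (f : ℕ → X → X) (A : ℕ → ℕ) (n : ℕ) (u : Fin n → Set X) : Set X :=
  ⋂ j : Fin n, nacomp f 0 (A j.1) ⁻¹' (u j)

/-- `N((⋁_{j=1}^n f_0^{-a_j} 𝒜)|_Λ)`: the minimal cardinality of a subfamily of the join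
cover whose union contains `Λ`. -/
noncomputable def coverN {X : Type*} (f : ℕ → X → X) (A : ℕ → ℕ) (n : ℕ) (Λ : Set X)
    (𝒜 : Finset (Set X)) : ℕ :=
  sInf {m | ∃ S : Finset (Fin n → Set X), (∀ u ∈ S, ∀ j, u j ∈ 𝒜) ∧
    (Λ ⊆ ⋃ u ∈ S, seqCell f A n u) ∧ S.card = m}

/-- `h_A(f, Λ, 𝒜)`, the sequence entropy of `f` on `Λ` relative to the open cover `𝒜`. -/
noncomputable def coverEntOf {X : Type*} (f : ℕ → X → X) (A : ℕ → ℕ) (Λ : Set X)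
    (𝒜 : Finset (Set X)) : EReal :=
  limsup (fun n : ℕ => ((Real.log (coverN f A n Λ 𝒜) / n : ℝ) : EReal)) atTop

/-- `h_A(f, Λ)`: topological sequence entropy via open covers. -/
noncomputable def coverEnt {X : Type*} [TopologicalSpace X] (f : ℕ → X → X) (A : ℕ → ℕ)
    (Λ : Set X) : EReal :=
  ⨆ 𝒜 : {𝒜 : Finset (Set X) // IsFinOpenCover 𝒜}, coverEntOf f A Λ 𝒜

/-- The supremum topological sequence entropy `h*(f) = sup_A h_A(f)`. -/
noncomputable def supSeqEnt {X : Type*} [PseudoMetricSpace X] (f : ℕ → X → X) : EReal :=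
  ⨆ A : {A : ℕ → ℕ // StrictMono A}, sepEnt f A univ

/-- The `n`-th compositions system `f_{0,∞}^n`, whose `k`-th map is `f_{kn}^n`. -/
def compSys {X : Type*} (f : ℕ → X → X) (n : ℕ) : ℕ → X → X :=
  fun k => nacomp f (k * n) n

/-- A finite measurable partition of the space. -/
def IsFinMeasPartition {X : Type*} [MeasurableSpace X] (P : Finset (Set X)) : Prop :=
  (∀ s ∈ P, MeasurableSet s) ∧ ((P : Set (Set X)).PairwiseDisjoint id) ∧
    ⋃₀ ↑P = (univ : Set X)

/-- `h_{A,μ}(f, P) = limsup (1/n) H_μ(⋁_{j=1}^n f_0^{-a_j} P)`. -/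
noncomputable def measSeqEntPart {X : Type*} [MeasurableSpace X] (μ : Measure X)
    (f : ℕ → X → X) (A : ℕ → ℕ) (P : Finset (Set X)) : EReal :=
  limsup (fun n : ℕ =>
    (((∑ u : Fin n → {s // s ∈ P},
        Real.negMulLog (μ (seqCell f A n (fun j => (u j : Set X)))).toReal) / n : ℝ) : EReal))
    atTop

/-- The measure-theoretic sequence entropy `h_{A,μ}(f)`. -/
noncomputable def measSeqEnt {X : Type*} [MeasurableSpace X] (μ : Measure X)
    (f : ℕ → X → X) (A : ℕ → ℕ) : EReal :=
  ⨆ P : {P : Finset (Set X) // IsFinMeasPartition P}, measSeqEntPart μ f A P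

/-- Covering dimension at most `d`: every finite open cover has a finite open refinement
of order at most `d + 1`. -/
def HasCovDimLE (X : Type*) [TopologicalSpace X] (d : ℕ) : Prop :=
  ∀ 𝒜 : Finset (Set X), IsFinOpenCover 𝒜 → ∃ ℬ : Finset (Set X), IsFinOpenCover ℬ ∧
    (∀ v ∈ ℬ, ∃ u ∈ 𝒜, v ⊆ u) ∧ ∀ x : X, ({v : Set X | v ∈ ℬ ∧ x ∈ v}).ncard ≤ d + 1

/-- The induced nonautonomous system `f̂` on the space of Borel probability measures,
carrying the Lévy–Prokhorov (Prohorov) metric: `f̂ n μ = (f n)_* μ`. -/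
noncomputable def inducedSys {X : Type*} [MeasurableSpace X] (f : ℕ → X → X)
    (hf : ∀ n, Measurable (f n)) :
    ℕ → LevyProkhorov (ProbabilityMeasure X) → LevyProkhorov (ProbabilityMeasure X) :=
  fun n μ => (LevyProkhorov.toMeasureEquiv (α := ProbabilityMeasure X)).symm
    (((LevyProkhorov.toMeasureEquiv (α := ProbabilityMeasure X)) μ).map (hf n).aemeasurable)

/-- Multi-sensitivity of a nonautonomous system. -/
def MultiSensitive {X : Type*} [PseudoMetricSpace X] (f : ℕ → X → X) : Prop :=
  ∃ δ : ℝ, 0 < δ ∧ ∀ (k : ℕ) (V : Fin k → Set X),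
    (∀ i, IsOpen (V i)) → (∀ i, (V i).Nonempty) →
      ∃ n : ℕ, 1 ≤ n ∧ ∀ i, δ < Metric.diam (nacomp f 0 n '' V i)

lemma nacomp_add {X : Type*} (f : ℕ → X → X) (i s t : ℕ) :
    nacomp f i (s + t) = nacomp f (i + s) t ∘ nacomp f i s := by
  induction t with
  | zero => rfl
  | succ t ih =>
    show f (i + (s + t)) ∘ nacomp f i (s + t) = _
    rw [ih, ← Nat.add_assoc]
    rfl

lemma nacomp_equicont {X : Type*} [MetricSpace X] [CompactSpace X]
    (f : ℕ → X → X) (hequi : Equicontinuous f) (n : ℕ) {ε : ℝ} (hε : 0 < ε) :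
    ∃ δ > 0, ∀ i r, r ≤ n → ∀ x y : X, dist x y < δ →
      dist (nacomp f i r x) (nacomp f i r y) < ε := by
  have hu : UniformEquicontinuous f :=
    CompactSpace.uniformEquicontinuous_of_equicontinuous hequi
  rw [Metric.uniformEquicontinuous_iff] at hu
  induction n generalizing ε with
  | zero =>
    refine ⟨ε, hε, fun i r hr x y hxy => ?_⟩
    interval_cases r
    simpa [nacomp] using hxy
  | succ n ih =>
    obtain ⟨η, hη, hηf⟩ := hu ε hε
    obtain ⟨δ, hδ, hδf⟩ := ih (lt_min hη hε)
    refine ⟨δ, hδ, fun i r hr x y hxy => ?_⟩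
    rcases Nat.lt_succ_iff_lt_or_eq.mp (Nat.lt_succ_of_le hr) with h | rfl
    · exact lt_of_lt_of_le (hδf i r (Nat.lt_succ_iff.mp h) x y hxy) (min_le_right _ _)
    · have := hδf i n le_rfl x y hxy
      exact hηf _ _ (this.trans_le (min_le_left _ _)) (i + n)

lemma sep_bddAbove {X : Type*} [MetricSpace X] [CompactSpace X]
    (f : ℕ → X → X) (A : ℕ → ℕ) (n : ℕ) {ε : ℝ} (hε : 0 < ε) (Λ : Set X) :
    BddAbove {m | ∃ E : Finset X, IsSepSet f A n ε Λ E ∧ E.card = m} := by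
  have htb : TotallyBounded (univ : Set (Fin n → X)) := isCompact_univ.totallyBounded
  rw [Metric.totallyBounded_iff] at htb
  obtain ⟨t, htf, htc⟩ := htb (ε / 2) (by linarith)
  refine ⟨htf.toFinset.card, fun m hm => ?_⟩
  obtain ⟨E, ⟨-, hsep⟩, rfl⟩ := hm
  set Φ : X → (Fin n → X) := fun x j => nacomp f 0 (A j) x with hΦ
  have hch : ∀ x ∈ E, ∃ y ∈ htf.toFinset, Φ x ∈ Metric.ball y (ε / 2) := by
    intro x _
    have := htc (mem_univ (Φ x))
    simp only [mem_iUnion, exists_prop] at this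
    obtain ⟨y, hy, hmem⟩ := this
    exact ⟨y, htf.mem_toFinset.mpr hy, hmem⟩
  choose F hF1 hF2 using hch
  classical
  rcases E.eq_empty_or_nonempty with rfl | ⟨x₀, hx₀⟩
  · simp
  have : Nonempty X := ⟨x₀⟩
  refine Finset.card_le_card_of_injOn
    (fun x => if h : x ∈ E then F x h else Classical.arbitrary _) (fun x hx => by have hx' : x ∈ E := (by simpa using hx); simpa [hx'] using hF1 x hx') ?_
  intro x hx y hy hxy
  simp only [Finset.mem_coe] at hx hy
  simp only [dif_pos hx, dif_pos hy] at hxy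
  by_contra hne
  obtain ⟨j, hj⟩ := hsep x hx y hy hne
  have h1 : dist (Φ x) (Φ y) < ε := by
    calc dist (Φ x) (Φ y) ≤ dist (Φ x) (F x hx) + dist (F x hx) (Φ y) := dist_triangle _ _ _
    _ < ε / 2 + ε / 2 := by
        refine add_lt_add (Metric.mem_ball.mp (hF2 x hx)) ?_
        rw [hxy]
        exact Metric.mem_ball'.mp (hF2 y hy)
    _ = ε := by ring
  exact absurd (lt_of_lt_of_le hj ((dist_le_pi_dist (Φ x) (Φ y) j).trans h1.le)) (lt_irrefl ε)

lemma sep_transfer {X : Type*} [MetricSpace X] [CompactSpace X]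
    (f : ℕ → X → X) (hequi : Equicontinuous f) {n : ℕ} (hn : 1 ≤ n) {ε : ℝ} (hε : 0 < ε) :
    ∃ δ > 0, ∀ t m : ℕ, t ≤ m * n → ∀ E : Finset X,
      IsSepSet f (fun i => i + 1) t ε univ E → IsSepSet f (fun j => j * n) m δ univ E := by
  obtain ⟨δ, hδ, hδf⟩ := nacomp_equicont f hequi n hε
  refine ⟨δ / 2, by linarith, fun t m htm E hsep => ⟨hsep.1, fun x hx y hy hne => ?_⟩⟩
  by_contra hcon
  push_neg at hcon
  obtain ⟨j, hj⟩ := hsep.2 x hx y hy hne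
  set t' : ℕ := (j : ℕ) + 1 with ht'
  set q : ℕ := (t' - 1) / n with hq
  set r : ℕ := (t' - 1) % n + 1 with hr
  have ht'1 : t' - 1 = (j : ℕ) := by omega
  have hqm : q < m := by
    have h1 : q * n ≤ t' - 1 := Nat.div_mul_le_self _ _
    have h2 : t' - 1 < m * n := by rw [ht'1]; exact lt_of_lt_of_le j.2 htm
    exact Nat.lt_of_mul_lt_mul_right (lt_of_le_of_lt h1 h2)
  have hrn : r ≤ n := by
    rw [hr]
    exact Nat.succ_le_of_lt (Nat.mod_lt _ (Nat.lt_of_lt_of_le Nat.zero_lt_one hn))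
  have hdecomp : q * n + r = t' := by
    have h1 := Nat.div_add_mod (t' - 1) n
    have h2 : q * n = n * ((t' - 1) / n) := by rw [hq, Nat.mul_comm]
    omega
  have hdq : dist (nacomp f 0 (q * n) x) (nacomp f 0 (q * n) y) ≤ δ / 2 := by
    have := hcon ⟨q, hqm⟩
    simpa using this
  have hlt : dist (nacomp f (q * n) r (nacomp f 0 (q * n) x))
      (nacomp f (q * n) r (nacomp f 0 (q * n) y)) < ε :=
    hδf (q * n) r hrn _ _ (by linarith)
  have heq : nacomp f 0 t' = nacomp f (q * n) r ∘ nacomp f 0 (q * n) := by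
    rw [← hdecomp, nacomp_add, Nat.zero_add]
  have hj' : ε < dist (nacomp f 0 t' x) (nacomp f 0 t' y) := hj
  rw [heq] at hj'
  exact absurd hj' (not_lt_of_ge hlt.le)

/-- For an equicontinuous nonautonomous system, positive topological entropy implies
infinite supremum topological sequence entropy. -/
theorem supSeqEnt_top_of_pos_ent {X : Type*} [MetricSpace X] [CompactSpace X]
    (f : ℕ → X → X) (hf : ∀ n, Continuous (f n)) (hequi : Equicontinuous f)
    (hpos : 0 < sepEnt f (fun i => i + 1) univ) :
    supSeqEnt f = ⊤ := by
  classical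
  rw [sepEnt] at hpos
  obtain ⟨⟨ε, hε⟩, hL⟩ := lt_iSup_iff.mp hpos
  obtain ⟨z, hz0, hzL⟩ := exists_between hL
  have hzt : z ≠ ⊤ := fun h => absurd hzL (by simp [h])
  have hzb : z ≠ ⊥ := fun h => absurd hz0 (by simp [h])
  set c := z.toReal with hcdef
  have hcz : (c : EReal) = z := EReal.coe_toReal hzt hzb
  have hc : 0 < c := by
    rw [← EReal.coe_lt_coe_iff, hcz]
    exact_mod_cast hz0
  have hfreq : ∃ᶠ t in atTop, (c : EReal) <
      ((Real.log (maxSep f (fun i => i + 1) t ε univ) / t : ℝ) : EReal) :=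
    frequently_lt_of_lt_limsup (h := by rw [hcz]; exact hzL)
  rw [frequently_atTop] at hfreq
  have key : ∀ n : ℕ, 1 ≤ n → (↑(c * n / 2) : EReal) ≤ supSeqEnt f := by
    intro n hn
    obtain ⟨δ, hδ, hδtr⟩ := sep_transfer f hequi hn hε
    have hA : StrictMono (fun j : ℕ => j * n) := fun a b hab =>
      (Nat.mul_lt_mul_right hn).mpr hab
    refine le_trans ?_ (le_iSup (fun A : {A : ℕ → ℕ // StrictMono A} => sepEnt f A univ)
      ⟨_, hA⟩)
    refine le_trans ?_ (le_iSup (fun e : {e : ℝ // 0 < e} =>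
      limsup (fun m : ℕ =>
        ((Real.log (maxSep f (fun j => j * n) m e univ) / m : ℝ) : EReal)) atTop) ⟨δ, hδ⟩)
    refine le_limsup_of_frequently_le ?_
    rw [frequently_atTop]
    intro M
    obtain ⟨t, ht, hct⟩ := hfreq (n * (M + 2))
    set s := maxSep f (fun i => i + 1) t ε univ with hsdef
    have ht1 : 1 ≤ t := le_trans (by nlinarith) ht
    have hct' : c * t < Real.log s := by
      have h1 : c < Real.log s / t := EReal.coe_lt_coe_iff.mp hct
      rwa [lt_div_iff₀ (by exact_mod_cast ht1 : (0:ℝ) < (t:ℝ))] at h1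
    set m : ℕ := (t - 1) / n + 1 with hmdef
    have htm : t ≤ m * n := by
      have h1 := Nat.div_add_mod (t - 1) n
      have h2 : (t - 1) % n < n := Nat.mod_lt _ (by omega)
      have h3 : m * n = n * ((t - 1) / n) + n := by rw [hmdef, Nat.add_mul, Nat.one_mul,
        Nat.mul_comm]
      omega
    have hnm : n * (m - 1) ≤ t := by
      have h2 : m - 1 = (t - 1) / n := by rw [hmdef, Nat.add_sub_cancel]
      rw [h2, Nat.mul_comm]
      exact le_trans (Nat.div_mul_le_self _ _) (by omega)
    have hmM : M + 2 ≤ m := by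
      have h1 : n * (M + 2) - 1 ≤ t - 1 := by omega
      have h2 : (n * (M + 2) - 1) / n ≥ M + 1 := by
        have hrg : n * (M + 2) = n * (M + 1) + n := by ring
        have : n * (M + 1) ≤ n * (M + 2) - 1 := by omega
        calc M + 1 = n * (M + 1) / n := by rw [Nat.mul_div_cancel_left _ (by omega)]
        _ ≤ (n * (M + 2) - 1) / n := Nat.div_le_div_right this
      have := Nat.div_le_div_right (c := n) h1
      omega
    have hbdd := sep_bddAbove f (fun i => i + 1) t hε univ
    have h0 : 0 ∈ {m' | ∃ E : Finset X, IsSepSet f (fun i => i + 1) t ε univ E ∧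
        E.card = m'} := ⟨∅, ⟨by simp, by simp⟩, rfl⟩
    have hmem : s ∈ {m' | ∃ E : Finset X, IsSepSet f (fun i => i + 1) t ε univ E ∧
        E.card = m'} := Nat.sSup_mem ⟨0, h0⟩ hbdd
    obtain ⟨E, hE, hcard⟩ := hmem
    have hE' : IsSepSet f (fun j => j * n) m δ univ E := hδtr t m htm E hE
    have hle : s ≤ maxSep f (fun j => j * n) m δ univ :=
      le_csSup (sep_bddAbove f _ m hδ univ) ⟨E, hE', hcard⟩
    refine ⟨m, by omega, ?_⟩
    rw [EReal.coe_le_coe_iff]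
    have hs1 : 1 ≤ s := by
      by_contra h
      have : s = 0 := by omega
      rw [this] at hct'
      simp at hct'
      nlinarith [hct', hc, (by exact_mod_cast ht1 : (1:ℝ) ≤ (t:ℝ))]
    have hlog : Real.log s ≤ Real.log (maxSep f (fun j => j * n) m δ univ) :=
      Real.log_le_log (by exact_mod_cast hs1) (by exact_mod_cast hle)
    have hm2 : (2:ℝ) ≤ (m:ℝ) := by exact_mod_cast (by omega : 2 ≤ m)
    have hmpos : (0:ℝ) < (m:ℝ) := by linarith
    rw [le_div_iff₀ hmpos]
    have hstep : c * (n * (m - 1) : ℕ) ≤ c * t := by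
      have : ((n * (m - 1) : ℕ) : ℝ) ≤ (t : ℝ) := by exact_mod_cast hnm
      nlinarith
    have hcast : ((n * (m - 1) : ℕ) : ℝ) = (n : ℝ) * ((m : ℝ) - 1) := by
      have h1 : 1 ≤ m := by omega
      push_cast [Nat.cast_sub h1]
      ring
    have h2 : c * n / 2 * m ≤ c * ((n : ℝ) * ((m : ℝ) - 1)) := by
      have hcn : (0:ℝ) ≤ c * (n:ℝ) := by positivity
      have h := mul_le_mul_of_nonneg_left (by linarith : (m:ℝ)/2 ≤ (m:ℝ) - 1) hcn
      calc c * n / 2 * m = c * (n:ℝ) * ((m:ℝ)/2) := by ring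
      _ ≤ c * (n:ℝ) * ((m:ℝ) - 1) := h
      _ = c * ((n : ℝ) * ((m : ℝ) - 1)) := by ring
    calc c * ↑n / 2 * ↑m ≤ c * ((n : ℝ) * ((m : ℝ) - 1)) := h2
    _ = c * ((n * (m - 1) : ℕ) : ℝ) := by rw [hcast]
    _ ≤ c * t := hstep
    _ ≤ Real.log s := hct'.le
    _ ≤ _ := hlog
  by_contra hne
  have hle := EReal.le_coe_toReal hne
  set R := (supSeqEnt f).toReal with hR
  obtain ⟨n, hn1, hnR⟩ : ∃ n : ℕ, 1 ≤ n ∧ R < c * n / 2 := by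
    obtain ⟨n, hn⟩ := exists_nat_gt ((R * 2 + 2) / c)
    refine ⟨n + 1, by omega, ?_⟩
    rw [div_lt_iff₀ hc] at hn
    push_cast
    nlinarith
  have := (key n hn1).trans hle
  rw [EReal.coe_le_coe_iff] at this
  linarith
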